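/- arXiv:2509.02461 — 3 statements merged into one kernel-verified Lean document; each statement's English description precedes it below -/
import Mathlib

section
/- For nonnegative integers α, β with α + β ≥ 1, and for all r, s ≥ 0 with r + s ≥ 1, the Carlitz–Scoville numbers satisfy A(r,s|α,β) = (s+α)·A(r-1,s|α,β) + (r+β)·A(r,s-1|α,β), where A(r,s|α,β) is defined as the sum over all permutations σ of {1,…,r+s+1} with exactly r descents of α^(lrmin(σ)-1)·β^(rlmin(σ)-1). Here terms with a negative argument are zero. -/
open Finset

def pval {n : ℕ} (σ : Equiv.Perm (Fin n)) (i : ℕ) : ℕ :=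
  if h : i < n then (σ ⟨i, h⟩ : ℕ) else 0

def desSet {n : ℕ} (σ : Equiv.Perm (Fin n)) : Finset ℕ :=
  (Finset.range (n - 1)).filter (fun i => pval σ (i + 1) < pval σ i)

def des {n : ℕ} (σ : Equiv.Perm (Fin n)) : ℕ := (desSet σ).card

def maj {n : ℕ} (σ : Equiv.Perm (Fin n)) : ℕ := ∑ i ∈ desSet σ, (i + 1)

def lrmin {n : ℕ} (σ : Equiv.Perm (Fin n)) : ℕ :=
  ((Finset.range n).filter (fun i => ∀ j ∈ Finset.range i, pval σ i < pval σ j)).card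

def rlmin {n : ℕ} (σ : Equiv.Perm (Fin n)) : ℕ :=
  ((Finset.range n).filter
    (fun i => ∀ j ∈ Finset.range n, i < j → pval σ i < pval σ j)).card

def CS (α β r s : ℕ) : ℕ :=
  ∑ σ ∈ (Finset.univ : Finset (Equiv.Perm (Fin (r + s + 1)))).filter (fun σ => des σ = r),
    α ^ (lrmin σ - 1) * β ^ (rlmin σ - 1)

/-- insert the max value `n` at position `p` into `τ`. -/
def ins {n : ℕ} (τ : Equiv.Perm (Fin n)) (p : Fin (n+1)) : Equiv.Perm (Fin (n+1)) :=
  (finSuccEquiv' p).trans ((Equiv.optionCongr τ).trans (finSuccEquiv' (Fin.last n)).symm)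

lemma ins_self {n : ℕ} (τ : Equiv.Perm (Fin n)) (p : Fin (n+1)) :
    ins τ p p = Fin.last n := by
  simp [ins, finSuccEquiv'_at, finSuccEquiv'_symm_none]

lemma ins_succAbove {n : ℕ} (τ : Equiv.Perm (Fin n)) (p : Fin (n+1)) (i : Fin n) :
    ins τ p (p.succAbove i) = (τ i).castSucc := by
  simp only [ins, Equiv.trans_apply, finSuccEquiv'_succAbove, Equiv.optionCongr_apply,
    Option.map_some, finSuccEquiv'_symm_some]
  rw [Fin.succAbove_last]

lemma pval_lt {n : ℕ} (τ : Equiv.Perm (Fin n)) {j : ℕ} (h : j < n) : pval τ j < n := by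
  simp only [pval, dif_pos h]
  exact (τ ⟨j, h⟩).isLt

lemma pval_ins_self {n : ℕ} (τ : Equiv.Perm (Fin n)) (p : Fin (n+1)) :
    pval (ins τ p) p.val = n := by
  have h : p.val < n + 1 := p.isLt
  simp only [pval, dif_pos h]
  have : (⟨p.val, h⟩ : Fin (n+1)) = p := rfl
  rw [this, ins_self]
  rfl

lemma pval_ins_lt {n : ℕ} (τ : Equiv.Perm (Fin n)) (p : Fin (n+1)) {j : ℕ}
    (hj : j < p.val) : pval (ins τ p) j = pval τ j := by
  have hjn : j < n := lt_of_lt_of_le hj (Nat.lt_succ_iff.mp p.isLt)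
  have hj1 : j < n + 1 := Nat.lt_succ_of_lt hjn
  simp only [pval, dif_pos hjn, dif_pos hj1]
  have : (⟨j, hj1⟩ : Fin (n+1)) = p.succAbove ⟨j, hjn⟩ := by
    rw [Fin.succAbove_of_castSucc_lt]
    · rfl
    · exact hj
  rw [this, ins_succAbove]
  rfl

lemma pval_ins_gt {n : ℕ} (τ : Equiv.Perm (Fin n)) (p : Fin (n+1)) {j : ℕ}
    (hj : p.val < j) (hjn : j < n + 1) : pval (ins τ p) j = pval τ (j - 1) := by
  have hj1 : j - 1 < n := by omega
  simp only [pval, dif_pos hjn, dif_pos hj1]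
  have : (⟨j, hjn⟩ : Fin (n+1)) = p.succAbove ⟨j - 1, hj1⟩ := by
    rw [Fin.succAbove_of_le_castSucc]
    · ext; simp only [Fin.val_succ]; omega
    · simp only [Fin.le_def, Fin.coe_castSucc]; omega
  rw [this, ins_succAbove]
  rfl

lemma des_eq_sum {n : ℕ} (σ : Equiv.Perm (Fin (n+1))) :
    des σ = ∑ i ∈ Finset.range n, (if pval σ (i+1) < pval σ i then 1 else 0) := by
  rw [des, desSet, Finset.card_filter]; norm_num

lemma sum_split3 (f : ℕ → ℕ) (q m : ℕ) (h : q + 1 < m + 1) :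
    ∑ i ∈ Finset.range (m+1), f i =
      (∑ i ∈ Finset.range q, f i) + f q + f (q+1) + ∑ i ∈ Finset.Ico (q+2) (m+1), f i := by
  rw [Finset.range_eq_Ico,
    ← Finset.sum_Ico_consecutive f (Nat.zero_le q) (by omega : q ≤ m+1),
    Finset.sum_eq_sum_Ico_succ_bot (by omega : q < m+1) f,
    Finset.sum_eq_sum_Ico_succ_bot (by omega : q+1 < m+1) f, ← Finset.range_eq_Ico]
  ring

lemma sum_split2 (f : ℕ → ℕ) (q m : ℕ) (h : q < m) :
    ∑ i ∈ Finset.range m, f i =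
      (∑ i ∈ Finset.range q, f i) + f q + ∑ i ∈ Finset.Ico (q+1) m, f i := by
  rw [Finset.range_eq_Ico,
    ← Finset.sum_Ico_consecutive f (Nat.zero_le q) (by omega : q ≤ m),
    Finset.sum_eq_sum_Ico_succ_bot (by omega : q < m) f, ← Finset.range_eq_Ico]
  ring

lemma des_ins_zero {n : ℕ} (τ : Equiv.Perm (Fin n)) (p : Fin (n+1)) (hn : 1 ≤ n)
    (hp : p.val = 0) : des (ins τ p) = des τ + 1 := by
  obtain ⟨m, rfl⟩ : ∃ m, n = m + 1 := ⟨n - 1, by omega⟩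
  rw [des_eq_sum, des_eq_sum τ, Finset.sum_range_succ']
  have e0 : pval (ins τ p) 0 = m + 1 := by
    have := pval_ins_self τ p; rwa [hp] at this
  have e1 : pval (ins τ p) 1 = pval τ 0 := by
    rw [pval_ins_gt τ p (by omega) (by omega)]
  have h0 : (if pval (ins τ p) (0+1) < pval (ins τ p) 0 then 1 else 0) = 1 := by
    rw [if_pos]
    rw [e0]; simpa [e1] using pval_lt τ (show 0 < m+1 by omega)
  rw [h0]
  congr 1
  apply Finset.sum_congr rfl
  intro i hi
  simp only [Finset.mem_range] at hi
  rw [pval_ins_gt τ p (by omega) (by omega), pval_ins_gt τ p (by omega) (by omega)]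
  norm_num

lemma des_ins_last {n : ℕ} (τ : Equiv.Perm (Fin n)) (p : Fin (n+1)) (hn : 1 ≤ n)
    (hp : p.val = n) : des (ins τ p) = des τ := by
  obtain ⟨m, rfl⟩ : ∃ m, n = m + 1 := ⟨n - 1, by omega⟩
  rw [des_eq_sum, des_eq_sum τ, Finset.sum_range_succ]
  have e0 : pval (ins τ p) (m+1) = m + 1 := by
    have := pval_ins_self τ p; rwa [hp] at this
  have hlast : (if pval (ins τ p) (m+1) < pval (ins τ p) m then 1 else 0) = 0 := by
    rw [if_neg]
    rw [e0, pval_ins_lt τ p (by omega)]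
    have := pval_lt τ (show m < m+1 by omega)
    omega
  rw [hlast, add_zero]
  apply Finset.sum_congr rfl
  intro i hi
  simp only [Finset.mem_range] at hi
  rw [pval_ins_lt τ p (by omega), pval_ins_lt τ p (by omega)]

lemma des_ins_mid {n : ℕ} (τ : Equiv.Perm (Fin n)) (p : Fin (n+1))
    (hp0 : 0 < p.val) (hpn : p.val < n) :
    des (ins τ p) = if p.val - 1 ∈ desSet τ then des τ else des τ + 1 := by
  obtain ⟨m, rfl⟩ : ∃ m, n = m + 1 := ⟨n - 1, by omega⟩
  have hqm : p.val - 1 < m := by omega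
  have hσ : des (ins τ p) =
      (∑ i ∈ Finset.range (p.val-1), (if pval (ins τ p) (i+1) < pval (ins τ p) i then 1 else 0))
      + (if pval (ins τ p) (p.val-1+1) < pval (ins τ p) (p.val-1) then 1 else 0)
      + (if pval (ins τ p) (p.val-1+1+1) < pval (ins τ p) (p.val-1+1) then 1 else 0)
      + ∑ i ∈ Finset.Ico (p.val-1+2) (m+1),
          (if pval (ins τ p) (i+1) < pval (ins τ p) i then 1 else 0) := by
    rw [des_eq_sum]
    exact sum_split3 _ _ _ (by omega)
  have hτ : des τ =
      (∑ i ∈ Finset.range (p.val-1), (if pval τ (i+1) < pval τ i then 1 else 0))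
      + (if pval τ (p.val-1+1) < pval τ (p.val-1) then 1 else 0)
      + ∑ i ∈ Finset.Ico (p.val-1+1) m, (if pval τ (i+1) < pval τ i then 1 else 0) := by
    rw [des_eq_sum τ]
    exact sum_split2 _ _ _ (by omega)
  have hA : (∑ i ∈ Finset.range (p.val-1), (if pval (ins τ p) (i+1) < pval (ins τ p) i then 1 else 0))
      = ∑ i ∈ Finset.range (p.val-1), (if pval τ (i+1) < pval τ i then 1 else 0) := by
    apply Finset.sum_congr rfl
    intro i hi
    simp only [Finset.mem_range] at hi
    rw [pval_ins_lt τ p (by omega), pval_ins_lt τ p (by omega)]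
  have hq0 : (if pval (ins τ p) (p.val-1+1) < pval (ins τ p) (p.val-1) then 1 else 0) = 0 := by
    rw [if_neg]
    have e : p.val - 1 + 1 = p.val := by omega
    rw [e, pval_ins_self, pval_ins_lt τ p (by omega)]
    have := pval_lt τ (show p.val - 1 < m+1 by omega)
    omega
  have hq1 : (if pval (ins τ p) (p.val-1+1+1) < pval (ins τ p) (p.val-1+1) then 1 else 0) = 1 := by
    rw [if_pos]
    have e : p.val - 1 + 1 = p.val := by omega
    rw [e, pval_ins_self, pval_ins_gt τ p (by omega) (by omega)]
    have := pval_lt τ (show p.val + 1 - 1 < m+1 by omega)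
    omega
  have hC : (∑ i ∈ Finset.Ico (p.val-1+2) (m+1),
        (if pval (ins τ p) (i+1) < pval (ins τ p) i then 1 else 0))
      = ∑ i ∈ Finset.Ico (p.val-1+1) m, (if pval τ (i+1) < pval τ i then 1 else 0) := by
    rw [Finset.sum_Ico_eq_sum_range, Finset.sum_Ico_eq_sum_range]
    have hlen : m + 1 - (p.val-1+2) = m - (p.val-1+1) := by omega
    rw [hlen]
    apply Finset.sum_congr rfl
    intro i hi
    simp only [Finset.mem_range] at hi
    rw [pval_ins_gt τ p (by omega) (by omega), pval_ins_gt τ p (by omega) (by omega)]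
    have e1 : p.val - 1 + 2 + i + 1 - 1 = (p.val - 1 + 1 + i) + 1 := by omega
    have e2 : p.val - 1 + 2 + i - 1 = p.val - 1 + 1 + i := by omega
    rw [e1, e2]
  rw [hA, hq0, hq1] at hσ
  have hmem : (p.val - 1 ∈ desSet τ) ↔ (if pval τ (p.val-1+1) < pval τ (p.val-1) then 1 else 0) = 1 := by
    simp only [desSet, Finset.mem_filter, Finset.mem_range]
    constructor
    · rintro ⟨-, h⟩; rw [if_pos h]
    · intro h
      by_cases hc : pval τ (p.val-1+1) < pval τ (p.val-1)
      · exact ⟨by omega, hc⟩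
      · rw [if_neg hc] at h; omega
  have hDle : (if pval τ (p.val-1+1) < pval τ (p.val-1) then 1 else 0) = 0
      ∨ (if pval τ (p.val-1+1) < pval τ (p.val-1) then 1 else 0) = 1 := by
    split_ifs <;> simp
  split_ifs with h
  · rw [hmem] at h; omega
  · rw [hmem] at h; omega

def lrSet {n : ℕ} (σ : Equiv.Perm (Fin n)) : Finset ℕ :=
  (Finset.range n).filter (fun i => ∀ j ∈ Finset.range i, pval σ i < pval σ j)

def rlSet {n : ℕ} (σ : Equiv.Perm (Fin n)) : Finset ℕ :=
  (Finset.range n).filter (fun i => ∀ j ∈ Finset.range n, i < j → pval σ i < pval σ j)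

lemma lrmin_eq {n : ℕ} (σ : Equiv.Perm (Fin n)) : lrmin σ = (lrSet σ).card := rfl
lemma rlmin_eq {n : ℕ} (σ : Equiv.Perm (Fin n)) : rlmin σ = (rlSet σ).card := rfl

lemma mem_lrSet {n : ℕ} (σ : Equiv.Perm (Fin n)) (a : ℕ) :
    a ∈ lrSet σ ↔ a < n ∧ ∀ j, j < a → pval σ a < pval σ j := by
  simp [lrSet, Finset.mem_filter, Finset.mem_range]

lemma mem_rlSet {n : ℕ} (σ : Equiv.Perm (Fin n)) (a : ℕ) :
    a ∈ rlSet σ ↔ a < n ∧ ∀ j, j < n → a < j → pval σ a < pval σ j := by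
  simp [rlSet, Finset.mem_filter, Finset.mem_range]

lemma lrmin_pos {n : ℕ} (τ : Equiv.Perm (Fin n)) (hn : 1 ≤ n) : 1 ≤ lrmin τ := by
  rw [lrmin_eq]
  rw [Nat.succ_le_iff, Finset.card_pos]
  exact ⟨0, by simp [mem_lrSet]; omega⟩

lemma rlmin_pos {n : ℕ} (τ : Equiv.Perm (Fin n)) (hn : 1 ≤ n) : 1 ≤ rlmin τ := by
  rw [rlmin_eq]
  rw [Nat.succ_le_iff, Finset.card_pos]
  refine ⟨(τ.symm ⟨0, hn⟩).val, ?_⟩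
  rw [mem_rlSet]
  have hlt : (τ.symm ⟨0, hn⟩).val < n := (τ.symm ⟨0, hn⟩).isLt
  have hv : pval τ (τ.symm ⟨0, hn⟩).val = 0 := by
    simp only [pval, dif_pos hlt]
    have : (⟨(τ.symm ⟨0, hn⟩).val, hlt⟩ : Fin n) = τ.symm ⟨0, hn⟩ := rfl
    rw [this, Equiv.apply_symm_apply]
  refine ⟨hlt, fun j hj hij => ?_⟩
  rw [hv]
  simp only [pval, dif_pos hj]
  by_contra hc
  push_neg at hc
  interval_cases h : (τ ⟨j, hj⟩ : ℕ)
  · have : (⟨j, hj⟩ : Fin n) = τ.symm ⟨0, hn⟩ := by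
      apply_fun τ
      rw [Equiv.apply_symm_apply]
      exact Fin.ext h
    have : j = (τ.symm ⟨0, hn⟩).val := congrArg Fin.val this
    omega

lemma lrmin_ins_zero {n : ℕ} (τ : Equiv.Perm (Fin n)) (p : Fin (n+1)) (hn : 1 ≤ n)
    (hp : p.val = 0) : lrmin (ins τ p) = lrmin τ + 1 := by
  have hset : lrSet (ins τ p) = insert 0 ((lrSet τ).image Nat.succ) := by
    ext a
    simp only [Finset.mem_insert, Finset.mem_image, mem_lrSet]
    constructor
    · rintro ⟨han, h⟩
      rcases Nat.eq_zero_or_pos a with rfl | ha0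
      · exact Or.inl rfl
      · refine Or.inr ⟨a - 1, ⟨by omega, fun j hj => ?_⟩, by omega⟩
        have e1 : pval (ins τ p) a = pval τ (a - 1) := pval_ins_gt τ p (by omega) (by omega)
        have e2 : pval (ins τ p) (j+1) = pval τ j := by
          rw [pval_ins_gt τ p (by omega) (by omega)]; norm_num
        have := h (j+1) (by omega)
        rwa [e1, e2] at this
    · rintro (rfl | ⟨i, ⟨hin, hi⟩, rfl⟩)
      · exact ⟨by omega, fun j hj => absurd hj (by omega)⟩
      · refine ⟨by omega, fun j hj => ?_⟩
        have e1 : pval (ins τ p) (i+1) = pval τ i := by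
          rw [pval_ins_gt τ p (by omega) (by omega)]; norm_num
        rcases Nat.eq_zero_or_pos j with rfl | hj0
        · have e0 : pval (ins τ p) 0 = n := by
            have := pval_ins_self τ p; rwa [hp] at this
          rw [e1, e0]
          exact pval_lt τ hin
        · have e2 : pval (ins τ p) j = pval τ (j - 1) := pval_ins_gt τ p (by omega) (by omega)
          rw [e1, e2]
          exact hi (j-1) (by omega)
  rw [lrmin_eq, lrmin_eq, hset, Finset.card_insert_of_notMem (by simp),
    Finset.card_image_of_injective _ Nat.succ_injective]

lemma lrmin_ins_pos {n : ℕ} (τ : Equiv.Perm (Fin n)) (p : Fin (n+1))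
    (hp : 0 < p.val) : lrmin (ins τ p) = lrmin τ := by
  have hset : lrSet (ins τ p) =
      (lrSet τ).image (fun i => if i < p.val then i else i + 1) := by
    ext a
    simp only [Finset.mem_image, mem_lrSet]
    constructor
    · rintro ⟨han, h⟩
      have hap : a ≠ p.val := by
        intro he
        have h0 := h 0 (by omega)
        rw [he, pval_ins_self] at h0
        have : pval (ins τ p) 0 = pval τ 0 := pval_ins_lt τ p (by omega)
        rw [this] at h0
        have := pval_lt τ (show 0 < n by omega)
        omega
      rcases lt_or_gt_of_ne hap with hlt | hgt
      · refine ⟨a, ⟨by omega, fun j hj => ?_⟩, if_pos hlt⟩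
        have := h j (by omega)
        rwa [pval_ins_lt τ p (by omega), pval_ins_lt τ p (by omega)] at this
      · refine ⟨a - 1, ⟨by omega, fun j hj => ?_⟩, ?_⟩
        · have e1 : pval (ins τ p) a = pval τ (a-1) := pval_ins_gt τ p (by omega) (by omega)
          rcases lt_or_ge j p.val with hjp | hjp
          · have := h j (by omega)
            rwa [e1, pval_ins_lt τ p (by omega)] at this
          · have := h (j+1) (by omega)
            rw [e1, pval_ins_gt τ p (by omega) (by omega)] at this
            simpa using this
        · rw [if_neg (by omega)]; omega
    · rintro ⟨i, ⟨hin, hi⟩, rfl⟩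
      by_cases hip : i < p.val
      · rw [if_pos hip]
        refine ⟨by omega, fun j hj => ?_⟩
        rw [pval_ins_lt τ p (by omega), pval_ins_lt τ p (by omega)]
        exact hi j hj
      · rw [if_neg hip]
        push_neg at hip
        refine ⟨by omega, fun j hj => ?_⟩
        have e1 : pval (ins τ p) (i+1) = pval τ i := by
          rw [pval_ins_gt τ p (by omega) (by omega)]; norm_num
        rcases lt_trichotomy j p.val with hjp | hjp | hjp
        · rw [e1, pval_ins_lt τ p (by omega)]
          exact hi j (by omega)
        · rw [e1, hjp, pval_ins_self]
          exact pval_lt τ hin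
        · rw [e1, pval_ins_gt τ p (by omega) (by omega)]
          exact hi (j-1) (by omega)
  rw [lrmin_eq, lrmin_eq, hset, Finset.card_image_of_injOn]
  intro a _ b _ hab
  simp only at hab
  split_ifs at hab <;> omega

lemma rlmin_ins_last {n : ℕ} (τ : Equiv.Perm (Fin n)) (p : Fin (n+1)) (hn : 1 ≤ n)
    (hp : p.val = n) : rlmin (ins τ p) = rlmin τ + 1 := by
  have hset : rlSet (ins τ p) = insert n (rlSet τ) := by
    ext a
    simp only [Finset.mem_insert, mem_rlSet]
    constructor
    · rintro ⟨han, h⟩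
      rcases Nat.lt_or_ge a n with ha | ha
      · refine Or.inr ⟨ha, fun j hj hij => ?_⟩
        have := h j (by omega) hij
        rwa [pval_ins_lt τ p (by omega), pval_ins_lt τ p (by omega)] at this
      · exact Or.inl (by omega)
    · rintro (rfl | ⟨hin, hi⟩)
      · exact ⟨by omega, fun j hj hij => by omega⟩
      · refine ⟨by omega, fun j hj hij => ?_⟩
        rcases Nat.lt_or_ge j n with hjn | hjn
        · rw [pval_ins_lt τ p (by omega), pval_ins_lt τ p (by omega)]
          exact hi j hjn hij
        · have hjeq : j = n := by omega
          have e0 : pval (ins τ p) n = n := by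
            have := pval_ins_self τ p; rwa [hp] at this
          rw [hjeq, e0, pval_ins_lt τ p (by omega)]
          exact pval_lt τ hin
  rw [rlmin_eq, rlmin_eq, hset, Finset.card_insert_of_notMem]
  intro hc
  rw [mem_rlSet] at hc
  omega

lemma rlmin_ins_nonlast {n : ℕ} (τ : Equiv.Perm (Fin n)) (p : Fin (n+1)) (hn : 1 ≤ n)
    (hp : p.val < n) : rlmin (ins τ p) = rlmin τ := by
  have hset : rlSet (ins τ p) =
      (rlSet τ).image (fun i => if i < p.val then i else i + 1) := by
    ext a
    simp only [Finset.mem_image, mem_rlSet]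
    constructor
    · rintro ⟨han, h⟩
      have hap : a ≠ p.val := by
        intro he
        have h0 := h n (by omega) (by omega)
        rw [he, pval_ins_self, pval_ins_gt τ p (by omega) (by omega)] at h0
        have := pval_lt τ (show n - 1 < n by omega)
        omega
      rcases lt_or_gt_of_ne hap with hlt | hgt
      · refine ⟨a, ⟨by omega, fun j hj hij => ?_⟩, if_pos hlt⟩
        rcases lt_or_ge j p.val with hjp | hjp
        · have := h j (by omega) (by omega)
          rwa [pval_ins_lt τ p (by omega), pval_ins_lt τ p (by omega)] at this
        · have := h (j+1) (by omega) (by omega)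
          rw [pval_ins_lt τ p (by omega), pval_ins_gt τ p (by omega) (by omega)] at this
          simpa using this
      · refine ⟨a - 1, ⟨by omega, fun j hj hij => ?_⟩, ?_⟩
        · have e1 : pval (ins τ p) a = pval τ (a-1) := pval_ins_gt τ p (by omega) (by omega)
          have := h (j+1) (by omega) (by omega)
          rw [e1, pval_ins_gt τ p (by omega) (by omega)] at this
          simpa using this
        · rw [if_neg (by omega)]; omega
    · rintro ⟨i, ⟨hin, hi⟩, rfl⟩
      by_cases hip : i < p.val
      · rw [if_pos hip]
        refine ⟨by omega, fun j hj hij => ?_⟩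
        rw [pval_ins_lt τ p (by omega)]
        rcases lt_trichotomy j p.val with hjp | hjp | hjp
        · rw [pval_ins_lt τ p (by omega)]
          exact hi j (by omega) hij
        · rw [hjp, pval_ins_self]
          exact pval_lt τ hin
        · rw [pval_ins_gt τ p (by omega) (by omega)]
          exact hi (j-1) (by omega) (by omega)
      · rw [if_neg hip]
        push_neg at hip
        refine ⟨by omega, fun j hj hij => ?_⟩
        have e1 : pval (ins τ p) (i+1) = pval τ i := by
          rw [pval_ins_gt τ p (by omega) (by omega)]; norm_num
        rw [e1, pval_ins_gt τ p (by omega) (by omega)]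
        exact hi (j-1) (by omega) (by omega)
  rw [rlmin_eq, rlmin_eq, hset, Finset.card_image_of_injOn]
  intro a _ b _ hab
  simp only at hab
  split_ifs at hab <;> omega

lemma ins_bijective (n : ℕ) :
    Function.Bijective (fun x : Equiv.Perm (Fin n) × Fin (n+1) => ins x.1 x.2) := by
  rw [Fintype.bijective_iff_injective_and_card]
  constructor
  · rintro ⟨τ, p⟩ ⟨τ', p'⟩ h
    simp only at h
    have hpp : p = p' := by
      by_contra hne
      obtain ⟨i, hi⟩ := Fin.exists_succAbove_eq hne
      have h1 : ins τ' p' (p'.succAbove i) = Fin.last n := by rw [hi, ← h, ins_self]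
      rw [ins_succAbove] at h1
      exact absurd h1 (Fin.ne_of_lt (Fin.castSucc_lt_last _))
    subst hpp
    have hττ : τ = τ' := by
      apply Equiv.ext
      intro i
      have : ins τ p (p.succAbove i) = ins τ' p (p.succAbove i) := by rw [h]
      rw [ins_succAbove, ins_succAbove] at this
      exact Fin.castSucc_injective n this
    rw [hττ]
  · simp [Fintype.card_perm, Nat.factorial_succ, mul_comm]

lemma sum_ite_mem_card (D : Finset ℕ) (m : ℕ) (hD : D ⊆ Finset.range m) (A B : ℕ) :
    (∑ j ∈ Finset.range m, if j ∈ D then A else B) = D.card * A + (m - D.card) * B := by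
  rw [Finset.sum_ite, Finset.sum_const, Finset.sum_const, smul_eq_mul, smul_eq_mul]
  have h1 : (Finset.range m).filter (· ∈ D) = D := by
    rw [Finset.filter_mem_eq_inter]
    exact Finset.inter_eq_right.mpr hD
  have h2 : (Finset.range m).filter (fun j => ¬ j ∈ D) = Finset.range m \ D := by
    rw [Finset.filter_not, h1]
  rw [h1, h2, Finset.card_sdiff_of_subset hD, Finset.card_range]

lemma desSet_subset {n : ℕ} (τ : Equiv.Perm (Fin n)) : desSet τ ⊆ Finset.range (n-1) :=
  Finset.filter_subset _ _

lemma des_le {n : ℕ} (τ : Equiv.Perm (Fin n)) : des τ ≤ n - 1 := by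
  have := Finset.card_le_card (desSet_subset τ)
  simpa [des, Finset.card_range] using this

lemma cs_inner_sum (α β r n : ℕ) (hn : 1 ≤ n) (τ : Equiv.Perm (Fin n)) :
    (∑ p : Fin (n+1), if des (ins τ p) = r then
        α ^ (lrmin (ins τ p) - 1) * β ^ (rlmin (ins τ p) - 1) else 0)
    = (if des τ + 1 = r then ((n - 1 - des τ) + α) * (α ^ (lrmin τ - 1) * β ^ (rlmin τ - 1)) else 0)
    + (if des τ = r then (des τ + β) * (α ^ (lrmin τ - 1) * β ^ (rlmin τ - 1)) else 0) := by
  obtain ⟨m, rfl⟩ : ∃ m, n = m + 1 := ⟨n - 1, by omega⟩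
  rw [Fin.sum_univ_succ, Fin.sum_univ_castSucc]
  have hlr : lrmin τ - 1 + 1 = lrmin τ := by
    have := lrmin_pos τ hn; omega
  have hrl : rlmin τ - 1 + 1 = rlmin τ := by
    have := rlmin_pos τ hn; omega
  -- the p = 0 term
  have h0 : (if des (ins τ (0 : Fin (m+2))) = r then
      α ^ (lrmin (ins τ (0 : Fin (m+2))) - 1) * β ^ (rlmin (ins τ (0 : Fin (m+2))) - 1) else 0)
      = (if des τ + 1 = r then α * (α ^ (lrmin τ - 1) * β ^ (rlmin τ - 1)) else 0) := by
    rw [des_ins_zero τ _ hn rfl, lrmin_ins_zero τ _ hn rfl,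
      rlmin_ins_nonlast τ _ hn (by simp)]
    congr 1
    have e : lrmin τ + 1 - 1 = (lrmin τ - 1) + 1 := by omega
    rw [e, pow_succ]
    ring
  -- the p = last term
  have hl : (if des (ins τ ((Fin.last m).succ)) = r then
      α ^ (lrmin (ins τ ((Fin.last m).succ)) - 1) * β ^ (rlmin (ins τ ((Fin.last m).succ)) - 1) else 0)
      = (if des τ = r then β * (α ^ (lrmin τ - 1) * β ^ (rlmin τ - 1)) else 0) := by
    have hpv : ((Fin.last m).succ : Fin (m+2)).val = m + 1 := by simp
    rw [des_ins_last τ _ hn hpv, rlmin_ins_last τ _ hn hpv, lrmin_ins_pos τ _ (by omega)]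
    congr 1
    have e : rlmin τ + 1 - 1 = (rlmin τ - 1) + 1 := by omega
    rw [e, pow_succ]
    ring
  -- the middle terms
  have hmid : ∀ i : Fin m, (if des (ins τ (i.castSucc.succ)) = r then
      α ^ (lrmin (ins τ (i.castSucc.succ)) - 1) * β ^ (rlmin (ins τ (i.castSucc.succ)) - 1) else 0)
      = (if i.val ∈ desSet τ then (if des τ = r then α ^ (lrmin τ - 1) * β ^ (rlmin τ - 1) else 0)
          else (if des τ + 1 = r then α ^ (lrmin τ - 1) * β ^ (rlmin τ - 1) else 0)) := by
    intro i
    have hpv : (i.castSucc.succ : Fin (m+2)).val = i.val + 1 := by simp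
    have h1 : 0 < (i.castSucc.succ : Fin (m+2)).val := by omega
    have h2 : (i.castSucc.succ : Fin (m+2)).val < m + 1 := by
      rw [hpv]; omega
    rw [des_ins_mid τ _ h1 h2, lrmin_ins_pos τ _ h1, rlmin_ins_nonlast τ _ hn h2, hpv]
    simp only [Nat.add_sub_cancel]
    split_ifs <;> rfl
  have hmids : (∑ i : Fin m, (if des (ins τ (i.castSucc.succ)) = r then
      α ^ (lrmin (ins τ (i.castSucc.succ)) - 1) * β ^ (rlmin (ins τ (i.castSucc.succ)) - 1) else 0))
      = des τ * (if des τ = r then α ^ (lrmin τ - 1) * β ^ (rlmin τ - 1) else 0)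
      + (m - des τ) * (if des τ + 1 = r then α ^ (lrmin τ - 1) * β ^ (rlmin τ - 1) else 0) := by
    rw [Finset.sum_congr rfl (fun i _ => hmid i)]
    have : (∑ i : Fin m, (if i.val ∈ desSet τ then (if des τ = r then α ^ (lrmin τ - 1) * β ^ (rlmin τ - 1) else 0)
          else (if des τ + 1 = r then α ^ (lrmin τ - 1) * β ^ (rlmin τ - 1) else 0)))
        = ∑ j ∈ Finset.range m, (if j ∈ desSet τ then (if des τ = r then α ^ (lrmin τ - 1) * β ^ (rlmin τ - 1) else 0)
          else (if des τ + 1 = r then α ^ (lrmin τ - 1) * β ^ (rlmin τ - 1) else 0)) := by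
      exact Fin.sum_univ_eq_sum_range (fun j => if j ∈ desSet τ then (if des τ = r then α ^ (lrmin τ - 1) * β ^ (rlmin τ - 1) else 0)
          else (if des τ + 1 = r then α ^ (lrmin τ - 1) * β ^ (rlmin τ - 1) else 0)) m
    rw [this, sum_ite_mem_card (desSet τ) m (by simpa using desSet_subset τ)]
    rfl
  rw [h0, hl, hmids]
  have hd := des_le τ
  simp only [Nat.add_sub_cancel] at hd
  simp only [Nat.add_sub_cancel]
  split_ifs with hc1 hc2 <;> first | ring | (exfalso; omega)

def T (α β n r : ℕ) : ℕ :=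
  ∑ σ ∈ (Finset.univ : Finset (Equiv.Perm (Fin n))).filter (fun σ => des σ = r),
    α ^ (lrmin σ - 1) * β ^ (rlmin σ - 1)

def T1 (α β n r : ℕ) : ℕ :=
  ∑ σ ∈ (Finset.univ : Finset (Equiv.Perm (Fin n))).filter (fun σ => des σ + 1 = r),
    α ^ (lrmin σ - 1) * β ^ (rlmin σ - 1)

lemma key (α β n r : ℕ) (hn : 1 ≤ n) :
    T α β (n+1) r = ((n - r) + α) * T1 α β n r + (r + β) * T α β n r := by
  have step1 : T α β (n+1) r = ∑ σ : Equiv.Perm (Fin (n+1)),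
      (if des σ = r then α ^ (lrmin σ - 1) * β ^ (rlmin σ - 1) else 0) := by
    rw [T, Finset.sum_filter]
  have step2 : (∑ x : Equiv.Perm (Fin n) × Fin (n+1),
      (if des (ins x.1 x.2) = r then
        α ^ (lrmin (ins x.1 x.2) - 1) * β ^ (rlmin (ins x.1 x.2) - 1) else 0))
      = ∑ σ : Equiv.Perm (Fin (n+1)),
      (if des σ = r then α ^ (lrmin σ - 1) * β ^ (rlmin σ - 1) else 0) :=
    Fintype.sum_bijective _ (ins_bijective n) _ _ (fun x => rfl)
  rw [step1, ← step2, Fintype.sum_prod_type]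
  have step3 : ∀ τ : Equiv.Perm (Fin n),
      (∑ p : Fin (n+1), if des (ins τ p) = r then
          α ^ (lrmin (ins τ p) - 1) * β ^ (rlmin (ins τ p) - 1) else 0)
      = (if des τ + 1 = r then ((n - r) + α) * (α ^ (lrmin τ - 1) * β ^ (rlmin τ - 1)) else 0)
      + (if des τ = r then (r + β) * (α ^ (lrmin τ - 1) * β ^ (rlmin τ - 1)) else 0) := by
    intro τ
    rw [cs_inner_sum α β r n hn τ]
    congr 1
    · split_ifs with h
      · congr 2
        omega
      · rfl
    · split_ifs with h
      · rw [h]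
      · rfl
  rw [Finset.sum_congr rfl (fun τ _ => step3 τ), Finset.sum_add_distrib]
  congr 1
  · rw [T1, Finset.sum_filter, Finset.mul_sum]
    apply Finset.sum_congr rfl
    intro τ _
    split_ifs <;> simp
  · rw [T, Finset.sum_filter, Finset.mul_sum]
    apply Finset.sum_congr rfl
    intro τ _
    split_ifs <;> simp

lemma T_high (α β n r : ℕ) (hn : 1 ≤ n) (h : n ≤ r) : T α β n r = 0 := by
  rw [T]
  apply Finset.sum_eq_zero
  intro σ hσ
  simp only [Finset.mem_filter] at hσ
  have := des_le σ
  omega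

theorem carlitz_scoville_recurrence (α β r s : ℕ) (hab : 1 ≤ α + β) (hrs : 1 ≤ r + s) :
    CS α β r s =
      (s + α) * (if r = 0 then 0 else CS α β (r - 1) s) +
      (r + β) * (if s = 0 then 0 else CS α β r (s - 1)) := by
  have h1 : CS α β r s = T α β ((r+s)+1) r := rfl
  rw [h1, key α β (r+s) r hrs]
  have e1 : r + s - r = s := by omega
  rw [e1]
  congr 2
  · -- T1 α β (r+s) r = if r = 0 then 0 else CS α β (r-1) s
    rcases Nat.eq_zero_or_pos r with rfl | hr
    · rw [if_pos rfl, T1]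
      apply Finset.sum_eq_zero
      intro σ hσ
      simp only [Finset.mem_filter] at hσ
      omega
    · rw [if_neg (by omega)]
      have h2 : CS α β (r-1) s = T α β ((r-1)+s+1) (r-1) := rfl
      have h3 : (r-1)+s+1 = r+s := by omega
      rw [h2, h3, T1, T]
      apply Finset.sum_congr
      · apply Finset.filter_congr
        intro σ _
        omega
      · intros; rfl
  · -- T α β (r+s) r = if s = 0 then 0 else CS α β r (s-1)
    rcases Nat.eq_zero_or_pos s with rfl | hs
    · rw [if_pos rfl]
      exact T_high α β (r+0) r (by omega) (by omega)
    · rw [if_neg (by omega)]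
      have h2 : CS α β r (s-1) = T α β (r+(s-1)+1) r := rfl
      have h3 : r+(s-1)+1 = r+s := by omega
      rw [h2, h3]
end

section
/- Let E_{n,k}(α,β,q) be defined by E_{0,0} = 1 and E_{n,k} = q^(β+k-1)[n-k+α]·E_{n-1,k-1} + [k+β]·E_{n-1,k} (with E_{n,k} = 0 if k < 0 or k > n), and set E_n(x;q) = Σ_{k=0}^n E_{n,k}(α,β,q) x^k. Then for n ≥ 1, E_n(x;q) = ([β] + q^β [n-1+α] x)·E_{n-1}(x;q) + (1-x)·x·q^β·δ_x(E_{n-1}(x;q)), where δ_x p(x) = (p(qx) - p(x))/((q-1)x) is the q-derivative. -/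
open Finset

noncomputable section

abbrev K : Type := RatFunc ℚ

def qq : K := RatFunc.X

def qint (m : ℕ) : K := ∑ i ∈ Finset.range m, qq ^ i

def qfact (m : ℕ) : K := ∏ i ∈ Finset.range m, qint (i + 1)

def qbinom (a b : ℕ) : K := qfact a / (qfact b * qfact (a - b))

def E (α β : ℕ) : ℕ → ℕ → K
  | 0, k => if k = 0 then 1 else 0
  | n + 1, 0 => qint β * E α β n 0
  | n + 1, k + 1 =>
      qq ^ (β + k) * qint (n - k + α) * E α β n k + qint (k + 1 + β) * E α β n (k + 1)

def poch (N : ℕ) : PowerSeries K :=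
  ∏ i ∈ Finset.range N, (1 - PowerSeries.C (R := K) (qq ^ i) * PowerSeries.X)

abbrev F : Type := RatFunc K

def x : F := RatFunc.X

def qF : F := algebraMap K F qq

def Enx (α β n : ℕ) : Polynomial K :=
  ∑ k ∈ Finset.range (n + 1), Polynomial.C (E α β n k) * Polynomial.X ^ k

/-- Evaluation of `E_n(x;q)` at an element of the rational function field `ℚ(q)(x)`. -/
def Eval (α β n : ℕ) (y : F) : F := Polynomial.aeval y (Enx α β n)

/-- The q-derivative `δ_x p(x) = (p(qx) - p(x))/((q-1)x)` of `E_{n-1}(x;q)`. -/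
def qDerivE (α β n : ℕ) : F :=
  (Eval α β n (qF * x) - Eval α β n x) / ((qF - 1) * x)

-- auxiliary lemmas

lemma qq_ne_one : qq ≠ 1 := by
  unfold qq
  intro h
  have h1 := congrArg RatFunc.num h
  simp [RatFunc.num_X, RatFunc.num_one] at h1
  have h2 := congrArg (fun p => Polynomial.coeff p 1) h1
  simp [Polynomial.coeff_one] at h2

lemma qint_add (a b : ℕ) : qint (a + b) = qint a + qq ^ a * qint b := by
  simp [qint, Finset.sum_range_add, pow_add, Finset.mul_sum]

lemma geom (k : ℕ) : (qq - 1) * qint k = qq ^ k - 1 := by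
  rw [qint, mul_comm, geom_sum_mul]

lemma E_eq_zero (α β : ℕ) : ∀ n k, n < k → E α β n k = 0 := by
  intro n
  induction n with
  | zero => intro k hk; simp only [E]; rw [if_neg (by omega)]
  | succ m ih =>
      intro k hk
      match k, hk with
      | k + 1, hk =>
        simp only [E]
        rw [ih k (by omega), ih (k + 1) (by omega)]
        ring

lemma Eval_eq (α β n : ℕ) (y : F) :
    Eval α β n y = ∑ k ∈ Finset.range (n + 1), algebraMap K F (E α β n k) * y ^ k := by
  rw [Eval, Enx, map_sum]
  simp [Polynomial.aeval_def]

theorem E_q_derivative_recurrence (α β n : ℕ) (hn : 1 ≤ n) :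
    Eval α β n x =
      (algebraMap K F (qint β) + qF ^ β * algebraMap K F (qint (n - 1 + α)) * x) *
        Eval α β (n - 1) x +
      (1 - x) * x * qF ^ β * qDerivE α β (n - 1) := by
  obtain ⟨m, rfl⟩ : ∃ m, n = m + 1 := ⟨n - 1, by omega⟩
  simp only [Nat.add_sub_cancel]
  set aK := algebraMap K F with haK
  have hqF : qF = aK qq := rfl
  have hqFb : qF ^ β = aK (qq ^ β) := by rw [map_pow, hqF]
  have hx : x ≠ 0 := RatFunc.X_ne_zero
  have hq1 : qF - 1 ≠ 0 := by
    rw [hqF, sub_ne_zero]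
    intro h
    exact qq_ne_one (aK.injective (by simpa using h))
  -- the scaled derivative sum
  set S : F := ∑ k ∈ Finset.range (m + 1), aK (qint k * E α β m k) * x ^ k with hS
  have hqD : qDerivE α β m = S / x := by
    rw [qDerivE, Eval_eq, Eval_eq]
    have key : (∑ k ∈ Finset.range (m + 1), aK (E α β m k) * (qF * x) ^ k) -
        ∑ k ∈ Finset.range (m + 1), aK (E α β m k) * x ^ k = (qF - 1) * S := by
      rw [hS, Finset.mul_sum, ← Finset.sum_sub_distrib]
      refine Finset.sum_congr rfl fun k _ => ?_
      have hpow := congrArg aK (geom k)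
      rw [map_mul, map_sub, map_sub, map_pow, map_one, ← hqF] at hpow
      calc aK (E α β m k) * (qF * x) ^ k - aK (E α β m k) * x ^ k
          = aK (E α β m k) * x ^ k * (qF ^ k - 1) := by rw [mul_pow]; ring
        _ = aK (E α β m k) * x ^ k * ((qF - 1) * aK (qint k)) := by rw [hpow]
        _ = (qF - 1) * (aK (qint k * E α β m k) * x ^ k) := by rw [map_mul]; ring
    rw [key, mul_comm (qF - 1) S, mul_comm (qF - 1) x, mul_div_mul_right S x hq1]
  rw [hqD]
  have hstep2 : (1 - x) * x * qF ^ β * (S / x) = (1 - x) * qF ^ β * S := by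
    rw [show (1 - x) * x * qF ^ β * (S / x) = (1 - x) * qF ^ β * S * (x / x) by ring,
      div_self hx, mul_one]
  rw [hstep2, Eval_eq, Eval_eq]
  have hE0 : E α β m (m + 1) = 0 := E_eq_zero α β m (m + 1) (by omega)
  -- the three sum identities
  have hA : aK (qint β) * (∑ k ∈ Finset.range (m + 1), aK (E α β m k) * x ^ k) + qF ^ β * S =
      ∑ k ∈ Finset.range (m + 1), aK (qint (k + β) * E α β m k) * x ^ k := by
    rw [hS, Finset.mul_sum, Finset.mul_sum, ← Finset.sum_add_distrib]
    refine Finset.sum_congr rfl fun k _ => ?_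
    rw [add_comm k β, qint_add]
    simp only [hqFb, map_add, map_mul, map_pow]
    ring
  have hB : qF ^ β * aK (qint (m + α)) * x *
        (∑ k ∈ Finset.range (m + 1), aK (E α β m k) * x ^ k) - x * (qF ^ β * S) =
      ∑ k ∈ Finset.range (m + 1), aK (qq ^ (β + k) * qint (m - k + α) * E α β m k) * x ^ (k + 1) := by
    rw [hS, Finset.mul_sum, Finset.mul_sum, Finset.mul_sum, ← Finset.sum_sub_distrib]
    refine Finset.sum_congr rfl fun k hk => ?_
    have hk' : k + (m - k + α) = m + α := by
      have := Finset.mem_range.mp hk; omega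
    have hsplit := qint_add k (m - k + α)
    rw [hk'] at hsplit
    rw [hsplit]
    simp only [hqFb, map_add, map_mul, map_pow, pow_add]
    ring
  have hC : ∑ k ∈ Finset.range (m + 1), aK (qint (k + β) * E α β m k) * x ^ k =
      aK (qint β * E α β m 0) +
        ∑ k ∈ Finset.range (m + 1), aK (qint (k + 1 + β) * E α β m (k + 1)) * x ^ (k + 1) := by
    rw [Finset.sum_range_succ' _ m, Finset.sum_range_succ]
    rw [hE0]
    simp [add_comm]
  have hL : ∑ k ∈ Finset.range (m + 1 + 1), aK (E α β (m + 1) k) * x ^ k =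
      aK (qint β * E α β m 0) +
        (∑ k ∈ Finset.range (m + 1), aK (qq ^ (β + k) * qint (m - k + α) * E α β m k) * x ^ (k + 1)
          + ∑ k ∈ Finset.range (m + 1), aK (qint (k + 1 + β) * E α β m (k + 1)) * x ^ (k + 1)) := by
    rw [Finset.sum_range_succ' _ (m + 1)]
    simp only [E]
    rw [← Finset.sum_add_distrib, pow_zero, mul_one, add_comm]
    congr 1
    refine Finset.sum_congr rfl fun k _ => ?_
    rw [map_add, add_mul]
  rw [hL]
  simp only [← haK] at *
  linear_combination -hA - hB - hC
end
end

section
/- For r ≥ 1 and 0 ≤ k ≤ n, the r-Eulerian numbers A(n+r, k; r), counting permutations of {1,…,n+r} whose number of r-descents equals k, satisfy A(n+r,k;r) = (k+r)·A(n+r-1,k;r) + (n+1-k)·A(n+r-1,k-1;r), with initial value A(r,0;r) = r!. -/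
open Finset

def rdesSet {m : ℕ} (r : ℕ) (σ : Equiv.Perm (Fin m)) : Finset ℕ :=
  (Finset.range (m - 1)).filter (fun i => pval σ (i + 1) + r ≤ pval σ i)

def rdes {m : ℕ} (r : ℕ) (σ : Equiv.Perm (Fin m)) : ℕ := (rdesSet r σ).card

def rEulerian (m k r : ℕ) : ℕ :=
  ((Finset.univ : Finset (Equiv.Perm (Fin m))).filter (fun σ => rdes r σ = k)).card

/-! ### Auxiliary machinery -/

namespace REaux

/-- Number of `r`-descents of a list (positions counted with `getD`). -/
def rdesF (r : ℕ) (l : List ℕ) : ℕ :=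
  ∑ i ∈ Finset.range (l.length - 1), if l.getD (i+1) 0 + r ≤ l.getD i 0 then 1 else 0

theorem rdesF_nil (r : ℕ) : rdesF r [] = 0 := by simp [rdesF]

theorem rdesF_cons (r a : ℕ) (s : List ℕ) :
    rdesF r (a :: s) = (if s.headD (a+1) + r ≤ a then 1 else 0) + rdesF r s := by
  cases s with
  | nil =>
    have h : ¬ (a + 1 + r ≤ a) := by omega
    simp [rdesF, h]
  | cons b s' =>
    simp only [rdesF, List.length_cons, Nat.add_sub_cancel, List.headD_cons]
    rw [Finset.sum_range_succ']
    simp only [List.getD_cons_succ, List.getD_cons_zero]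
    rw [Nat.add_comm]
    rfl

/-- Change in the number of `r`-descents caused by inserting `M` at position `p`. -/
def chg (M r : ℕ) (t : List ℕ) (p : ℕ) : ℕ :=
  if p < t.length then
    if t.getD p 0 + r ≤ M then
      if p = 0 then 1
      else if t.getD p 0 + r ≤ t.getD (p-1) 0 then 0 else 1
    else 0
  else 0

theorem rdesF_insertIdx (M r : ℕ) (t : List ℕ) : ∀ (p : ℕ), (∀ x ∈ t, x < M) →
    rdesF r (t.insertIdx p M) = rdesF r t + chg M r t p := by
  induction t with
  | nil =>
    intro p _
    cases p with
    | zero => simp [rdesF, chg]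
    | succ q => simp [List.insertIdx_succ_nil, chg, rdesF_nil]
  | cons a t' ih =>
    intro p hmem
    have ha : a < M := hmem a (by simp)
    cases p with
    | zero =>
      rw [List.insertIdx_zero, rdesF_cons, rdesF_cons]
      simp only [List.headD_cons, chg, List.length_cons, List.getD_cons_zero, Nat.zero_sub]
      split_ifs <;> grind
    | succ q =>
      rw [List.insertIdx_succ_cons, rdesF_cons, rdesF_cons,
        ih q (fun x hx => hmem x (List.mem_cons_of_mem a hx))]
      cases q with
      | zero =>
        cases t' with
        | nil =>
          simp only [List.insertIdx_zero, List.headD_cons, List.headD_nil, chg,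
            List.length_nil, List.length_cons, rdesF_nil]
          split_ifs <;> grind
        | cons b t'' =>
          have hb : b < M := hmem b (by simp)
          simp only [List.insertIdx_zero, List.headD_cons, chg, List.length_cons,
            List.getD_cons_zero, List.getD_cons_succ, Nat.zero_sub, Nat.add_sub_cancel,
            Nat.sub_self]
          split_ifs <;> grind
      | succ q' =>
        cases t' with
        | nil =>
          simp [List.insertIdx_succ_nil, chg]
        | cons b t'' =>
          rw [List.insertIdx_succ_cons]
          simp only [List.headD_cons, chg, List.length_cons, List.getD_cons_succ,
            Nat.add_sub_cancel]
          split_ifs <;> grind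

theorem sum_getD (f : ℕ → ℕ) (l : List ℕ) :
    ∑ p ∈ Finset.range l.length, f (l.getD p 0) = (l.map f).sum := by
  induction l with
  | nil => simp
  | cons a l ih =>
    rw [List.length_cons, Finset.sum_range_succ']
    simp only [List.getD_cons_succ, List.getD_cons_zero, ih, List.map_cons, List.sum_cons]
    omega

theorem sum_chg (M r : ℕ) (hr : 1 ≤ r) (hrM : r ≤ M + 1) (t : List ℕ)
    (ht : t.Perm (List.range M)) :
    (∑ p ∈ Finset.range (M+1), chg M r t p) + rdesF r t + r = M + 1 := by
  have hlen : t.length = M := by simpa using ht.length_eq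
  have hmem : ∀ x ∈ t, x < M := fun x hx => by
    simpa using ht.subset hx
  have hgd : ∀ p, p < M → t.getD p 0 < M := by
    intro p hp
    have hp' : p < t.length := by omega
    rw [List.getD_eq_getElem _ _ hp']
    exact hmem _ (List.getElem_mem hp')
  have hA : ∑ p ∈ Finset.range (M+1), chg M r t p = ∑ p ∈ Finset.range M, chg M r t p := by
    rw [Finset.sum_range_succ, chg, if_neg (by omega)]
    simp
  have hB : ∀ p ∈ Finset.range M,
      chg M r t p + (if 1 ≤ p then if t.getD p 0 + r ≤ t.getD (p-1) 0 then 1 else 0 else 0)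
        = if t.getD p 0 + r ≤ M then 1 else 0 := by
    intro p hp
    rw [Finset.mem_range] at hp
    have h1 : t.getD p 0 < M := hgd p hp
    have h2 : t.getD (p-1) 0 < M := hgd (p-1) (by omega)
    have h3 : p < t.length := by omega
    rw [chg, if_pos h3]
    split_ifs <;> omega
  have hBsum :
      (∑ p ∈ Finset.range M, chg M r t p)
      + (∑ p ∈ Finset.range M,
          (if 1 ≤ p then if t.getD p 0 + r ≤ t.getD (p-1) 0 then 1 else 0 else 0))
      = ∑ p ∈ Finset.range M, (if t.getD p 0 + r ≤ M then 1 else 0) := by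
    rw [← Finset.sum_add_distrib]
    exact Finset.sum_congr rfl hB
  have hC : (∑ p ∈ Finset.range M,
      (if 1 ≤ p then if t.getD p 0 + r ≤ t.getD (p-1) 0 then 1 else 0 else 0))
      = rdesF r t := by
    cases M with
    | zero => simp [rdesF, hlen]
    | succ N =>
      rw [Finset.sum_range_succ']
      have h0 : (if 1 ≤ (0:ℕ) then (if t.getD 0 0 + r ≤ t.getD (0-1) 0 then 1 else 0) else 0)
          = 0 := by norm_num
      rw [h0, rdesF, hlen]
      simp only [Nat.add_sub_cancel]
      rw [Finset.sum_congr rfl (fun i (_ : i ∈ Finset.range N) => by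
        rw [if_pos (by omega : 1 ≤ i + 1)])]
      omega
  have hD : (∑ p ∈ Finset.range M, (if t.getD p 0 + r ≤ M then 1 else 0)) = M + 1 - r := by
    have e1 := sum_getD (fun v => if v + r ≤ M then 1 else 0) t
    rw [hlen] at e1
    have e2 := sum_getD (fun v => if v + r ≤ M then 1 else 0) (List.range M)
    rw [List.length_range] at e2
    rw [e1, List.Perm.sum_eq (ht.map _), ← e2]
    rw [Finset.sum_congr rfl (fun p hp => by
      rw [List.getD_eq_getElem _ _ (by simpa using Finset.mem_range.mp hp), List.getElem_range])]
    rw [← Finset.card_filter]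
    have : Finset.filter (fun v => v + r ≤ M) (Finset.range M) = Finset.range (M + 1 - r) := by
      ext v
      simp only [Finset.mem_filter, Finset.mem_range]
      omega
    rw [this, Finset.card_range]
  omega

theorem chg_le_one (M r : ℕ) (t : List ℕ) (p : ℕ) : chg M r t p ≤ 1 := by
  unfold chg; split_ifs <;> omega

theorem inner_sum (M r k : ℕ) (hr : 1 ≤ r) (hrM : r ≤ M + 1) (t : List ℕ)
    (ht : t.Perm (List.range M)) :
    (∑ p ∈ Finset.range (M+1), if rdesF r (t.insertIdx p M) = k then 1 else 0) =
      if rdesF r t = k then k + r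
      else if rdesF r t + 1 = k then M + 1 - (k - 1 + r) else 0 := by
  have hmem : ∀ x ∈ t, x < M := fun x hx => by simpa using ht.subset hx
  have hins : ∀ p, rdesF r (t.insertIdx p M) = rdesF r t + chg M r t p :=
    fun p => rdesF_insertIdx M r t p hmem
  have hsum := sum_chg M r hr hrM t ht
  by_cases h1 : rdesF r t = k
  · rw [if_pos h1]
    have hpt : ∀ p ∈ Finset.range (M+1),
        (if rdesF r (t.insertIdx p M) = k then 1 else 0) = 1 - chg M r t p := by
      intro p _
      rw [hins p]
      have := chg_le_one M r t p
      split_ifs <;> omega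
    rw [Finset.sum_congr rfl hpt]
    have hsplit : (∑ p ∈ Finset.range (M+1), (1 - chg M r t p))
        + (∑ p ∈ Finset.range (M+1), chg M r t p) = M + 1 := by
      rw [← Finset.sum_add_distrib]
      rw [Finset.sum_congr rfl (fun p (_ : p ∈ Finset.range (M+1)) => by
        have := chg_le_one M r t p
        omega : ∀ p ∈ Finset.range (M+1), (1 - chg M r t p) + chg M r t p = 1)]
      simp
    omega
  · by_cases h2 : rdesF r t + 1 = k
    · rw [if_neg h1, if_pos h2]
      have hpt : ∀ p ∈ Finset.range (M+1),
          (if rdesF r (t.insertIdx p M) = k then 1 else 0) = chg M r t p := by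
        intro p _
        rw [hins p]
        have := chg_le_one M r t p
        split_ifs <;> omega
      rw [Finset.sum_congr rfl hpt]
      show (∑ p ∈ Finset.range (M+1), chg M r t p) = _
      omega
    · rw [if_neg h1, if_neg h2]
      have hpt : ∀ p ∈ Finset.range (M+1),
          (if rdesF r (t.insertIdx p M) = k then 1 else 0) = 0 := by
        intro p _
        rw [hins p]
        have := chg_le_one M r t p
        split_ifs <;> omega
      rw [Finset.sum_congr rfl hpt]
      simp

/-! ### List insertion/erasure bijection lemmas -/

theorem insertIdx_perm_cons (a : ℕ) : ∀ (l : List ℕ) (p : ℕ), p ≤ l.length →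
    (l.insertIdx p a).Perm (a :: l) := by
  intro l
  induction l with
  | nil =>
    intro p hp
    have : p = 0 := by simpa using hp
    subst this
    simp
  | cons b l ih =>
    intro p hp
    cases p with
    | zero => simp
    | succ q =>
      rw [List.insertIdx_succ_cons]
      exact ((ih q (by simpa using hp)).cons b).trans (List.Perm.swap a b l)

theorem erase_insertIdx (a : ℕ) : ∀ (l : List ℕ) (p : ℕ), p ≤ l.length → a ∉ l →
    (l.insertIdx p a).erase a = l := by
  intro l
  induction l with
  | nil =>
    intro p hp _
    have : p = 0 := by simpa using hp
    subst this
    simp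
  | cons b l ih =>
    intro p hp hna
    cases p with
    | zero => simp
    | succ q =>
      rw [List.insertIdx_succ_cons]
      have hba : b ≠ a := fun h => hna (h ▸ List.mem_cons_self (a := b) (l := l))
      rw [List.erase_cons_tail (by simp [hba])]
      rw [ih q (by simpa using hp) (fun h => hna (List.mem_cons_of_mem b h))]

theorem indexOf_insertIdx (a : ℕ) : ∀ (l : List ℕ) (p : ℕ), p ≤ l.length → a ∉ l →
    (l.insertIdx p a).idxOf a = p := by
  intro l
  induction l with
  | nil =>
    intro p hp _
    have : p = 0 := by simpa using hp
    subst this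
    simp
  | cons b l ih =>
    intro p hp hna
    cases p with
    | zero => simp
    | succ q =>
      rw [List.insertIdx_succ_cons]
      have hba : b ≠ a := fun h => hna (h ▸ List.mem_cons_self (a := b) (l := l))
      rw [List.idxOf_cons_ne _ hba, ih q (by simpa using hp)
        (fun h => hna (List.mem_cons_of_mem b h))]

theorem insertIdx_indexOf_erase (a : ℕ) : ∀ (l : List ℕ), a ∈ l →
    (l.erase a).insertIdx (l.idxOf a) a = l := by
  intro l
  induction l with
  | nil => intro h; simp at h
  | cons b l ih =>
    intro hmem
    by_cases hab : b = a
    · subst hab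
      simp
    · have ha : a ∈ l := by
        rcases List.mem_cons.mp hmem with h | h
        · exact absurd h.symm hab
        · exact h
      rw [List.erase_cons_tail (by simp [hab]), List.idxOf_cons_ne _ hab,
        List.insertIdx_succ_cons, ih ha]

theorem range_erase_top (M : ℕ) : (List.range (M+1)).erase M = List.range M := by
  rw [List.range_succ, List.erase_append_right _ (by simp), List.erase_cons_head,
    List.append_nil]

/-- Finset of all lists that are permutations of `range M`. -/
def permsF (M : ℕ) : Finset (List ℕ) := ((List.range M).permutations).toFinset

theorem mem_permsF {M : ℕ} {l : List ℕ} : l ∈ permsF M ↔ l.Perm (List.range M) := by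
  rw [permsF, List.mem_toFinset, List.mem_permutations]

theorem step2 (M : ℕ) (F : List ℕ → ℕ) :
    ∑ l ∈ permsF (M+1), F l
      = ∑ t ∈ permsF M, ∑ p ∈ Finset.range (M+1), F (t.insertIdx p M) := by
  rw [← Finset.sum_product']
  apply Finset.sum_nbij' (i := fun l => (l.erase M, l.idxOf M))
    (j := fun x => x.1.insertIdx x.2 M)
  · intro l hl
    rw [mem_permsF] at hl
    have hMl : M ∈ l := hl.mem_iff.mpr (by simp)
    rw [Finset.mem_product]
    constructor
    · rw [mem_permsF]
      exact (hl.erase M).trans (by rw [range_erase_top])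
    · rw [Finset.mem_range]
      have hlen : l.length = M + 1 := by simpa using hl.length_eq
      have := List.idxOf_lt_length_iff.mpr hMl
      omega
  · intro x hx
    rw [Finset.mem_product, mem_permsF, Finset.mem_range] at hx
    obtain ⟨ht, hp⟩ := hx
    rw [mem_permsF]
    have hlen : x.1.length = M := by simpa using ht.length_eq
    refine (insertIdx_perm_cons M x.1 x.2 (by omega)).trans ?_
    rw [List.range_succ]
    exact (ht.cons M).trans (List.perm_append_singleton M (List.range M)).symm
  · intro l hl
    rw [mem_permsF] at hl
    have hMl : M ∈ l := hl.mem_iff.mpr (by simp)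
    exact insertIdx_indexOf_erase M l hMl
  · intro x hx
    rw [Finset.mem_product, mem_permsF, Finset.mem_range] at hx
    obtain ⟨ht, hp⟩ := hx
    have hlen : x.1.length = M := by simpa using ht.length_eq
    have hnm : M ∉ x.1 := fun h => by
      have := ht.subset h
      simp at this
    have h1 := erase_insertIdx M x.1 x.2 (by omega) hnm
    have h2 := indexOf_insertIdx M x.1 x.2 (by omega) hnm
    ext <;> simp [h1, h2]
  · intro l hl
    rw [mem_permsF] at hl
    have hMl : M ∈ l := hl.mem_iff.mpr (by simp)
    rw [insertIdx_indexOf_erase M l hMl]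

/-! ### Permutations vs lists -/

def toL {m : ℕ} (σ : Equiv.Perm (Fin m)) : List ℕ := List.ofFn (fun i => (σ i : ℕ))

theorem toL_length {m : ℕ} (σ : Equiv.Perm (Fin m)) : (toL σ).length = m := by
  simp [toL]

theorem pval_eq_getD {m : ℕ} (σ : Equiv.Perm (Fin m)) (j : ℕ) :
    pval σ j = (toL σ).getD j 0 := by
  by_cases h : j < m
  · rw [pval, dif_pos h, List.getD_eq_getElem _ _ (by simpa [toL_length] using h)]
    simp [toL]
  · rw [pval, dif_neg h, List.getD_eq_default]
    rw [toL_length]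
    omega

theorem rdes_eq_rdesF {m : ℕ} (r : ℕ) (σ : Equiv.Perm (Fin m)) :
    rdes r σ = rdesF r (toL σ) := by
  rw [rdes, rdesSet, Finset.card_filter, rdesF, toL_length]
  exact Finset.sum_congr rfl (fun i _ => by rw [pval_eq_getD, pval_eq_getD])

theorem toL_perm_range {m : ℕ} (σ : Equiv.Perm (Fin m)) : (toL σ).Perm (List.range m) := by
  apply List.perm_of_nodup_nodup_toFinset_eq
  · exact List.nodup_ofFn.mpr (fun i j hij => σ.injective (Fin.val_injective hij))
  · exact List.nodup_range (n := m)
  · ext x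
    simp only [List.mem_toFinset, toL, List.mem_ofFn, Set.mem_range, List.mem_range]
    constructor
    · rintro ⟨i, rfl⟩
      exact (σ i).isLt
    · intro hx
      exact ⟨σ.symm ⟨x, hx⟩, by simp⟩

theorem count_eq (m k r : ℕ) :
    rEulerian m k r = ∑ l ∈ permsF m, (if rdesF r l = k then 1 else 0) := by
  rw [rEulerian, ← Finset.card_filter]
  apply Finset.card_bij (fun σ _ => toL σ)
  · intro σ hσ
    rw [Finset.mem_filter] at hσ ⊢
    exact ⟨mem_permsF.mpr (toL_perm_range σ), by rw [← rdes_eq_rdesF]; exact hσ.2⟩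
  · intro σ _ τ _ h
    have h' := List.ofFn_injective h
    exact Equiv.ext (fun i => Fin.val_injective (congrFun h' i))
  · intro l hl
    rw [Finset.mem_filter, mem_permsF] at hl
    obtain ⟨hperm, hk⟩ := hl
    have hlen : l.length = m := by simpa using hperm.length_eq
    have hnodup : l.Nodup := hperm.nodup_iff.mpr (List.nodup_range (n := m))
    have hlt : ∀ x ∈ l, x < m := fun x hx => by simpa using hperm.subset hx
    have hmemget : ∀ i : Fin m, l.getD (i : ℕ) 0 < m := by
      intro i
      have hi : (i : ℕ) < l.length := by rw [hlen]; exact i.isLt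
      rw [List.getD_eq_getElem _ _ hi]
      exact hlt _ (List.getElem_mem hi)
    set f : Fin m → Fin m := fun i => ⟨l.getD (i : ℕ) 0, hmemget i⟩ with hf
    have hinj : Function.Injective f := by
      intro i j hij
      have hi : (i : ℕ) < l.length := by rw [hlen]; exact i.isLt
      have hj : (j : ℕ) < l.length := by rw [hlen]; exact j.isLt
      have hval : l.getD (i:ℕ) 0 = l.getD (j:ℕ) 0 := congrArg Fin.val hij
      rw [List.getD_eq_getElem _ _ hi, List.getD_eq_getElem _ _ hj] at hval
      have hg : l.get ⟨i, hi⟩ = l.get ⟨j, hj⟩ := by simpa [List.get_eq_getElem] using hval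
      have := List.nodup_iff_injective_get.mp hnodup hg
      exact Fin.ext (by simpa using congrArg Fin.val this)
    set σ := Equiv.ofBijective f ((Finite.injective_iff_bijective).mp hinj) with hσ
    refine ⟨σ, ?_, ?_⟩
    · rw [Finset.mem_filter]
      refine ⟨Finset.mem_univ _, ?_⟩
      rw [rdes_eq_rdesF]
      have : toL σ = l := by
        apply List.ext_getElem (by simp [toL_length, hlen])
        intro i h1 h2
        simp only [toL, List.getElem_ofFn]
        show (f _ : ℕ) = _
        exact List.getD_eq_getElem _ _ h2
      rw [this]
      exact hk
    · apply List.ext_getElem (by simp [toL_length, hlen])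
      intro i h1 h2
      simp only [toL, List.getElem_ofFn]
      show (f _ : ℕ) = _
      exact List.getD_eq_getElem _ _ h2

theorem base_case (r : ℕ) (hr : 1 ≤ r) : rEulerian r 0 r = Nat.factorial r := by
  rw [rEulerian]
  have hall : ∀ σ : Equiv.Perm (Fin r), rdes r σ = 0 := by
    intro σ
    rw [rdes, Finset.card_eq_zero, rdesSet, Finset.filter_eq_empty_iff]
    intro i _
    have h1 : pval σ i < r := by
      rw [pval]
      split_ifs with h
      · exact (σ ⟨i, h⟩).isLt
      · omega
    omega
  rw [Finset.filter_true_of_mem (fun σ _ => hall σ), Finset.card_univ, Fintype.card_perm,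
    Fintype.card_fin]

end REaux

theorem rEulerian_recurrence (r n k : ℕ) (hr : 1 ≤ r) (hk : k ≤ n) :
    rEulerian (n + r) k r =
      (k + r) * rEulerian (n + r - 1) k r +
      (n + 1 - k) * (if k = 0 then 0 else rEulerian (n + r - 1) (k - 1) r) ∧
    rEulerian r 0 r = Nat.factorial r := by
  open REaux in
  constructor
  · have hM : n + r - 1 = n + r - 1 := rfl
    set M := n + r - 1 with hMdef
    have hM1 : n + r = M + 1 := by omega
    have hrM : r ≤ M + 1 := by omega
    rw [hM1, count_eq (M+1) k r,
      step2 M (fun l => if rdesF r l = k then 1 else 0)]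
    rw [Finset.sum_congr rfl (fun t htm =>
      inner_sum M r k hr hrM t (mem_permsF.mp htm))]
    have hsplit : ∀ t : List ℕ,
        (if rdesF r t = k then k + r
          else if rdesF r t + 1 = k then M + 1 - (k - 1 + r) else 0)
        = (k + r) * (if rdesF r t = k then 1 else 0)
          + (M + 1 - (k - 1 + r)) * (if rdesF r t + 1 = k then 1 else 0) := by
      intro t
      by_cases h1 : rdesF r t = k
      · have h2 : ¬ (rdesF r t + 1 = k) := by omega
        simp [h1, h2]
      · by_cases h2 : rdesF r t + 1 = k
        · simp [h1, h2]
        · simp [h1, h2]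
    rw [Finset.sum_congr rfl (fun t _ => hsplit t), Finset.sum_add_distrib,
      ← Finset.mul_sum, ← Finset.mul_sum, ← count_eq M k r]
    by_cases hk0 : k = 0
    · subst hk0
      rw [if_pos rfl]
      have hz : ∀ t ∈ permsF M, (if rdesF r t + 1 = 0 then 1 else 0) = 0 := by
        intro t _
        simp
      rw [Finset.sum_congr rfl hz]
      simp
    · rw [if_neg hk0]
      have he : ∀ t ∈ permsF M,
          (if rdesF r t + 1 = k then 1 else 0) = (if rdesF r t = k - 1 then 1 else 0) := by
        intro t _
        have : (rdesF r t + 1 = k) ↔ (rdesF r t = k - 1) := by omega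
        simp [this]
      rw [Finset.sum_congr rfl he, ← count_eq M (k-1) r]
      have : M + 1 - (k - 1 + r) = n + 1 - k := by omega
      rw [this]
  · exact REaux.base_case r hr
end
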